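/- arXiv:1601.08136 — 3 statements merged into one kernel-verified Lean document; each statement's English description precedes it below -/
import Mathlib

section
/- For 0 < α < 1, λ > 0 and Re(s) > λ^{1/α}, the Laplace transform of t ↦ E_α(-λ t^α) equals s^{α-1}/(λ + s^α), i.e. ∫_0^∞ e^{-st} E_α(-λ t^α) dt = s^{α-1}/(λ + s^α). -/
open MeasureTheory

section helpers
open Set Complex

lemma real_int (b r : ℝ) (hb : -1 < b) (hr : 0 < r) :
    IntegrableOn (fun t : ℝ => t ^ b * Real.exp (-(r * t))) (Ioi 0) := by
  have := integrableOn_rpow_mul_exp_neg_mul_rpow hb zero_lt_one hr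
  simpa [Real.rpow_one, neg_mul] using this

lemma cexp_meas (s : ℂ) (b : ℝ) :
    AEStronglyMeasurable (fun t : ℝ => Complex.exp (-(s * t)) * (t:ℂ) ^ (b:ℂ))
      (volume.restrict (Ioi 0)) := by
  apply Measurable.aestronglyMeasurable
  fun_prop

lemma cexp_norm {s : ℂ} {b t : ℝ} (ht : 0 < t) :
    ‖Complex.exp (-(s * t)) * (t:ℂ) ^ (b:ℂ)‖ = t ^ b * Real.exp (-(s.re * t)) := by
  rw [norm_mul, Complex.norm_exp,
    Complex.norm_cpow_eq_rpow_re_of_pos ht]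
  simp [mul_comm]

lemma cexp_int {s : ℂ} (hs : 0 < s.re) {b : ℝ} (hb : -1 < b) :
    IntegrableOn (fun t : ℝ => Complex.exp (-(s * t)) * (t:ℂ) ^ (b:ℂ)) (Ioi 0) := by
  apply Integrable.mono' (real_int b s.re hb hs) (cexp_meas s b)
  filter_upwards [ae_restrict_mem measurableSet_Ioi] with t ht
  rw [cexp_norm ht]

lemma laplace_cpow {a : ℝ} (ha : 0 < a) {s : ℂ} (hs : 0 < s.re) :
    ∫ t in Ioi (0:ℝ), Complex.exp (-(s * t)) * (t:ℂ) ^ (((a - 1 : ℝ)):ℂ)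
      = Complex.Gamma a / s ^ (a:ℂ) := by
  have ha' : (-1:ℝ) < a - 1 := by linarith
  set U : Set ℂ := {z : ℂ | 0 < z.re} with hU
  have hUo : IsOpen U := isOpen_lt continuous_const continuous_re
  set F : ℂ → ℂ := fun z => ∫ t in Ioi (0:ℝ),
      Complex.exp (-(z * t)) * (t:ℂ) ^ (((a - 1 : ℝ)):ℂ) with hF
  set G : ℂ → ℂ := fun z => Complex.Gamma a / z ^ (a:ℂ) with hG
  have key : Set.EqOn F G U := by
    have hFd : DifferentiableOn ℂ F U := by
      intro z hz
      have hz' : 0 < z.re := hz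
      have hε : 0 < z.re / 2 := by linarith
      have := hasDerivAt_integral_of_dominated_loc_of_deriv_le (μ := volume.restrict (Ioi 0))
        (F := fun w (t : ℝ) => Complex.exp (-(w * t)) * (t:ℂ) ^ (((a - 1 : ℝ)):ℂ))
        (F' := fun w (t : ℝ) => Complex.exp (-(w * t)) * -(t:ℂ) * (t:ℂ) ^ (((a - 1 : ℝ)):ℂ))
        (x₀ := z) (bound := fun t : ℝ => t ^ a * Real.exp (-(z.re / 2 * t))) (Metric.ball_mem_nhds z hε)
        (Filter.Eventually.of_forall fun w => cexp_meas w _)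
        (cexp_int hz' ha')
        ?_ ?_ (real_int a (z.re/2) (by linarith) hε) ?_
      · exact this.2.differentiableAt.differentiableWithinAt
      · apply Measurable.aestronglyMeasurable; fun_prop
      · filter_upwards [ae_restrict_mem measurableSet_Ioi] with t ht
        intro w hw
        have hwre : z.re / 2 ≤ w.re := by
          have h1 : |(w - z).re| ≤ ‖w - z‖ := Complex.abs_re_le_norm _
          have h2 : ‖w - z‖ < z.re / 2 := by
            rwa [← Complex.dist_eq, ← Metric.mem_ball]
          have := abs_le.mp (h1.trans h2.le)
          simp only [Complex.sub_re] at this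
          linarith [this.1]
        have ht' : (0:ℝ) < t := ht
        calc ‖Complex.exp (-(w * t)) * -(t:ℂ) * (t:ℂ) ^ (((a - 1 : ℝ)):ℂ)‖
            = t ^ (a-1) * Real.exp (-(w.re * t)) * t := by
              rw [mul_right_comm, norm_mul, cexp_norm ht']
              simp [abs_of_pos ht']
          _ = t ^ a * Real.exp (-(w.re * t)) := by
              rw [mul_right_comm, ← Real.rpow_add_one ht'.ne', sub_add_cancel]
          _ ≤ t ^ a * Real.exp (-(z.re / 2 * t)) := by
              have : -(w.re * t) ≤ -(z.re / 2 * t) := by nlinarith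
              exact mul_le_mul_of_nonneg_left (Real.exp_le_exp.mpr this)
                (Real.rpow_nonneg ht'.le a)
      · filter_upwards [ae_restrict_mem measurableSet_Ioi] with t ht
        intro w hw
        have h1 : HasDerivAt (fun w : ℂ => -(w * (t:ℂ))) (-(t:ℂ)) w := by
          have h0 : HasDerivAt (-fun y : ℂ => y * (t:ℂ)) (-(t:ℂ)) w := by
            simpa using ((hasDerivAt_id w).mul_const (t:ℂ)).neg
          exact h0
        have h2 := (h1.cexp).mul_const ((t:ℂ) ^ (((a - 1 : ℝ)):ℂ))
        convert h2 using 1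
    have hGd : DifferentiableOn ℂ G U := by
      intro z hz
      have hz' : 0 < z.re := hz
      have hzne : z ≠ 0 := fun h => by simp [h] at hz'
      have hcp : DifferentiableAt ℂ (fun z : ℂ => z ^ (a:ℂ)) z :=
        (differentiableAt_id.cpow (differentiableAt_const _) (Or.inl hz'))
      have hne : z ^ (a:ℂ) ≠ 0 := by
        rw [Ne, Complex.cpow_eq_zero_iff]
        simp [hzne]
      exact ((differentiableAt_const _).div hcp hne).differentiableWithinAt
    have hprec : IsPreconnected U := (convex_halfSpace_re_gt 0).isPreconnected
    have h1U : (1:ℂ) ∈ U := by simp [hU]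
    refine (hFd.analyticOnNhd hUo).eqOn_of_preconnected_of_frequently_eq
      (hGd.analyticOnNhd hUo) hprec h1U ?_
    set u : ℕ → ℂ := fun n => ((1 + ((n:ℝ)+1)⁻¹ : ℝ) : ℂ) with hu
    have hinvpos : ∀ n : ℕ, (0:ℝ) < ((n:ℝ)+1)⁻¹ := fun n => by
      have : (0:ℝ) ≤ (n:ℝ) := n.cast_nonneg
      positivity
    have htend : Filter.Tendsto u Filter.atTop (nhdsWithin 1 {(1:ℂ)}ᶜ) := by
      apply tendsto_nhdsWithin_of_tendsto_nhds_of_eventually_within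
      · have h0 : Filter.Tendsto (fun n : ℕ => ((n:ℝ)+1)⁻¹) Filter.atTop (nhds 0) :=
          tendsto_inv_atTop_zero.comp
            (Filter.tendsto_atTop_add_const_right _ 1 tendsto_natCast_atTop_atTop)
        have h1 : Filter.Tendsto (fun n : ℕ => (1 + ((n:ℝ)+1)⁻¹ : ℝ)) Filter.atTop (nhds 1) := by
          simpa using h0.const_add 1
        have h2 := (Complex.continuous_ofReal.tendsto 1).comp h1
        simpa [hu, Function.comp_def] using h2
      · apply Filter.Eventually.of_forall
        intro n
        simp only [hu, Set.mem_compl_iff, Set.mem_singleton_iff]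
        intro h
        have h' : (1 + ((n:ℝ)+1)⁻¹ : ℝ) = 1 := by exact_mod_cast h
        have := hinvpos n
        linarith
    apply htend.frequently
    apply Filter.Frequently.of_forall
    intro n
    have hrpos : (0:ℝ) < 1 + ((n:ℝ)+1)⁻¹ := by linarith [hinvpos n]
    have harepos : 0 < ((a:ℂ)).re := by simpa using ha
    have hmain := Complex.integral_cpow_mul_exp_neg_mul_Ioi harepos hrpos
    have hFeq : F (u n) = (1 / (1 + ((n:ℝ)+1)⁻¹ : ℝ) : ℂ) ^ (a:ℂ) * Complex.Gamma a := by
      rw [hF, ← hmain]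
      apply setIntegral_congr_fun measurableSet_Ioi
      intro t ht
      have h3 : ((a:ℂ) - 1) = (((a - 1 : ℝ)):ℂ) := by push_cast; ring
      dsimp only
      rw [h3]
      exact mul_comm _ _
    rw [hFeq]
    have hargne : ((1 + ((n:ℝ)+1)⁻¹ : ℝ) : ℂ).arg ≠ Real.pi := by
      rw [Complex.arg_ofReal_of_nonneg hrpos.le]
      exact fun h => Real.pi_ne_zero h.symm
    show _ = Complex.Gamma a / (u n) ^ (a:ℂ)
    rw [one_div, Complex.inv_cpow _ _ hargne, mul_comm, ← div_eq_mul_inv]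
  exact key hs

end helpers

section main
open Set Complex

/-- Laplace transform of the Mittag-Leffler function: for `0 < α < 1`, `λ > 0` and
`Re(s) > λ^(1/α)`, `∫_0^∞ e^{-st} E_α(-λ t^α) dt = s^{α-1}/(λ + s^α)`. -/
theorem laplace_mittagLeffler (α lam : ℝ) (hα : 0 < α) (hα1 : α < 1) (hlam : 0 < lam)
    (s : ℂ) (hs : lam ^ (1 / α) < s.re) :
    (∫ t in Set.Ioi (0 : ℝ),
        Complex.exp (-s * t) *
          ∑' k : ℕ, (-(lam : ℂ) * (t : ℂ) ^ (α : ℂ)) ^ k / Complex.Gamma (α * k + 1))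
      = s ^ ((α : ℂ) - 1) / ((lam : ℂ) + s ^ (α : ℂ)) := by
  have hre : 0 < s.re := lt_trans (Real.rpow_pos_of_pos hlam _) hs
  have hsne : s ≠ 0 := fun h => by simp [h] at hre
  have hlam_lt : lam < s.re ^ α := by
    have h1 : (lam ^ (1/α)) ^ α < s.re ^ α :=
      Real.rpow_lt_rpow (Real.rpow_nonneg hlam.le _) hs hα
    rwa [← Real.rpow_mul hlam.le, one_div, inv_mul_cancel₀ hα.ne', Real.rpow_one] at h1
  have habs_lt : lam < ‖s‖ ^ α := by
    refine lt_of_lt_of_le hlam_lt (Real.rpow_le_rpow hre.le (Complex.re_le_norm s) hα.le)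
  have hnormsα : ‖s ^ (α:ℂ)‖ = ‖s‖ ^ α := by
    rw [Complex.norm_cpow_of_ne_zero hsne]
    simp
  have habs_pos : (0:ℝ) < ‖s‖ := norm_pos_iff.mpr hsne
  have hsαne : s ^ (α:ℂ) ≠ 0 := by
    rw [Ne, Complex.cpow_eq_zero_iff]; simp [hsne]
  have hratio : ‖-(lam:ℂ) / s ^ (α:ℂ)‖ < 1 := by
    rw [norm_div, norm_neg, hnormsα, div_lt_one (by positivity)]
    simpa [abs_of_pos hlam] using habs_lt
  -- the summand functions
  set f : ℕ → ℝ → ℂ := fun k t =>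
    ((-(lam:ℂ))^k / Complex.Gamma ((α:ℂ) * k + 1)) *
      (Complex.exp (-(s * t)) * (t:ℂ) ^ (((α * k : ℝ)):ℂ)) with hf
  have hGcast : ∀ k : ℕ, ((α:ℂ) * k + 1) = (((α * k + 1 : ℝ)):ℂ) := by
    intro k; push_cast; ring
  have hGpos : ∀ k : ℕ, (0:ℝ) < α * k + 1 := fun k => by positivity
  have hGne : ∀ k : ℕ, Complex.Gamma ((α:ℂ) * k + 1) ≠ 0 := by
    intro k
    apply Complex.Gamma_ne_zero_of_re_pos
    rw [hGcast k]
    simpa using hGpos k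
  -- Step 1: rewrite the integrand as a tsum of f
  have hstep1 : (∫ t in Set.Ioi (0 : ℝ),
        Complex.exp (-s * t) *
          ∑' k : ℕ, (-(lam : ℂ) * (t : ℂ) ^ (α : ℂ)) ^ k / Complex.Gamma (α * k + 1))
      = ∫ t in Set.Ioi (0:ℝ), ∑' k : ℕ, f k t := by
    apply setIntegral_congr_fun measurableSet_Ioi
    intro t ht
    have ht' : (0:ℝ) < t := ht
    dsimp only
    rw [← tsum_mul_left]
    congr 1
    ext k
    have hpow : ((t:ℂ) ^ (α:ℂ))^k = (t:ℂ) ^ (((α * k : ℝ)):ℂ) := by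
      rw [← Complex.cpow_mul_nat]
      norm_cast
    rw [hf]
    dsimp only
    rw [mul_pow, hpow, neg_mul s, div_eq_mul_inv, div_eq_mul_inv]
    ring
  rw [hstep1]
  -- integrability of each summand
  have hint : ∀ k : ℕ, IntegrableOn (f k) (Ioi 0) := by
    intro k
    have h1 : (-1:ℝ) < α * k := lt_of_lt_of_le neg_one_lt_zero (by positivity)
    exact (cexp_int hre h1).const_mul _
  -- value of the norm integrals
  have hnormval : ∀ k : ℕ, (∫ t in Ioi (0:ℝ), ‖f k t‖)
      = lam ^ k * (1 / s.re) ^ (α * k + 1) := by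
    intro k
    have hΓpos : (0:ℝ) < Real.Gamma (α * k + 1) := Real.Gamma_pos_of_pos (hGpos k)
    have hc : ‖(-(lam:ℂ))^k / Complex.Gamma ((α:ℂ) * k + 1)‖
        = lam ^ k / Real.Gamma (α * k + 1) := by
      rw [norm_div, norm_pow, norm_neg, hGcast k, Complex.Gamma_ofReal]
      simp [abs_of_pos hlam, abs_of_pos hΓpos]
    have heq : ∀ t ∈ Ioi (0:ℝ), ‖f k t‖
        = (lam ^ k / Real.Gamma (α * k + 1)) * (t ^ (α * k) * Real.exp (-(s.re * t))) := by
      intro t ht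
      rw [hf]
      dsimp only
      rw [norm_mul, hc, cexp_norm ht]
    rw [setIntegral_congr_fun measurableSet_Ioi heq, integral_const_mul]
    have hval := Real.integral_rpow_mul_exp_neg_mul_Ioi (hGpos k) hre
    rw [show (α * (k:ℝ) + 1 - 1 : ℝ) = α * k by ring] at hval
    rw [hval]
    field_simp
  -- summability of the norm integrals
  have hsum : Summable (fun k : ℕ => ∫ t in Ioi (0:ℝ), ‖f k t‖) := by
    rw [show (fun k : ℕ => ∫ t in Ioi (0:ℝ), ‖f k t‖)
        = fun k : ℕ => lam ^ k * (1 / s.re) ^ (α * k + 1) from funext hnormval]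
    have hq0 : (0:ℝ) ≤ lam * (1 / s.re) ^ α := by positivity
    have hq1 : lam * (1 / s.re) ^ α < 1 := by
      rw [one_div, Real.inv_rpow hre.le, ← div_eq_mul_inv, div_lt_one (Real.rpow_pos_of_pos hre α)]
      exact hlam_lt
    have h := (summable_geometric_of_lt_one hq0 hq1).mul_right (1 / s.re)
    apply h.congr
    intro k
    rw [Real.rpow_add (by positivity), Real.rpow_one, mul_pow,
      ← Real.rpow_natCast ((1/s.re) ^ α) k, ← Real.rpow_mul (by positivity)]
    ring
  rw [← integral_tsum_of_summable_integral_norm hint hsum]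
  -- compute each integral
  have hterm : ∀ k : ℕ, (∫ t in Ioi (0:ℝ), f k t)
      = (-(lam:ℂ) / s ^ (α:ℂ)) ^ k * (1 / s) := by
    intro k
    have hlap := laplace_cpow (hGpos k) hre
    rw [show (α * (k:ℝ) + 1 - 1 : ℝ) = α * k by ring] at hlap
    rw [hf]
    dsimp only
    rw [integral_const_mul, hlap, ← hGcast k]
    have hspne : s ^ (((α * (k:ℝ) + 1 : ℝ)):ℂ) ≠ 0 := by
      rw [Ne, Complex.cpow_eq_zero_iff]; simp [hsne]
    rw [div_mul_div_comm, mul_comm ((-(lam:ℂ))^k) _, mul_div_mul_left _ _ (hGne k)]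
    rw [Complex.cpow_add _ _ hsne, Complex.cpow_mul_nat, Complex.cpow_one, div_pow]
    have h4 : (s ^ (α:ℂ))^k ≠ 0 := pow_ne_zero _ hsαne
    field_simp
  rw [tsum_congr hterm, tsum_mul_right, tsum_geometric_of_norm_lt_one hratio]
  -- final algebra
  have hden : (lam:ℂ) + s ^ (α:ℂ) ≠ 0 := by
    intro h
    have h2 : s ^ (α:ℂ) = -(lam:ℂ) := by linear_combination h
    have h3 : ‖s ^ (α:ℂ)‖ = lam := by
      rw [h2, norm_neg, Complex.norm_real, Real.norm_of_nonneg hlam.le]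
    rw [hnormsα] at h3
    exact absurd h3 (ne_of_gt habs_lt)
  rw [Complex.cpow_sub _ _ hsne, Complex.cpow_one]
  have h1 : (1 : ℂ) - (-(lam:ℂ) / s ^ (α:ℂ)) = ((lam:ℂ) + s ^ (α:ℂ)) / s ^ (α:ℂ) := by
    field_simp
    ring
  rw [h1, inv_div, div_mul_div_comm, mul_one, div_div, mul_comm ((lam:ℂ) + s ^ (α:ℂ)) s]

end main
end

section
/- Let M be a right-continuous martingale, and T, S stopping times with P(T < ∞) = 1 such that the stopped process {M(t∧T), t ≥ 0} is uniformly integrable. Then E[M(T) | F_{S∧T}] = M(S∧T) almost surely. -/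
open MeasureTheory Filter Topology

section Prog
variable {Ω : Type*} {m0 : MeasurableSpace Ω}

/-- A process with countable-range, bounded-by-`i` time argument is jointly measurable. -/
lemma aux_sm {ℱ : Filtration ℝ m0} {M : ℝ → Ω → ℝ} (hadp : StronglyAdapted ℱ M) {i : ℝ}
    (φ : Set.Iic i → ℝ) (hφ : Measurable φ) (hcr : (Set.range φ).Countable)
    (hle : ∀ t, φ t ≤ i) :
    StronglyMeasurable[Subtype.instMeasurableSpace.prod (ℱ i)]
      fun p : Set.Iic i × Ω => M (φ p.1) p.2 := by
  letI m' : MeasurableSpace (Set.Iic i × Ω) := Subtype.instMeasurableSpace.prod (ℱ i)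
  refine Measurable.stronglyMeasurable ?_
  intro s hs
  have : (fun p : Set.Iic i × Ω => M (φ p.1) p.2) ⁻¹' s =
      ⋃ v ∈ Set.range φ, ((fun p : Set.Iic i × Ω => φ p.1) ⁻¹' {v}) ∩
        (Prod.snd ⁻¹' (M v ⁻¹' s)) := by
    ext p
    simp only [Set.mem_preimage, Set.mem_iUnion, Set.mem_inter_iff, Set.mem_singleton_iff]
    constructor
    · intro h; exact ⟨φ p.1, Set.mem_range_self _, rfl, h⟩
    · rintro ⟨v, _, rfl, h⟩; exact h
  rw [this]
  refine MeasurableSet.biUnion hcr fun v hv => MeasurableSet.inter ?_ ?_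
  · exact (hφ.comp (measurable_fst.mono le_rfl le_rfl)) (measurableSet_singleton v)
  · obtain ⟨t, rfl⟩ := hv
    exact measurable_snd (((hadp (φ t)).mono (ℱ.mono (hle t))).measurable hs)

lemma progMeasurable_of_rightContinuous {ℱ : Filtration ℝ m0} {M : ℝ → Ω → ℝ}
    (hadp : StronglyAdapted ℱ M)
    (hrc : ∀ ω, ∀ t : ℝ, ContinuousWithinAt (fun s => M s ω) (Set.Ici t) t) :
    ProgMeasurable ℱ M := by
  intro i
  have h2 : ∀ n : ℕ, (0:ℝ) < 2 ^ n := fun n => by positivity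
  set U : ℕ → Set.Iic i × Ω → ℝ :=
    fun n p => M (min (⌈(p.1 : ℝ) * 2 ^ n⌉ / 2 ^ n) i) p.2 with hU
  have hUm : ∀ n, StronglyMeasurable[Subtype.instMeasurableSpace.prod (ℱ i)] (U n) := by
    intro n
    refine aux_sm hadp (fun t => min (⌈(t : ℝ) * 2 ^ n⌉ / 2 ^ n) i) ?_ ?_ ?_
    · exact ((measurable_from_top.comp (measurable_subtype_coe.mul_const _).ceil).div_const _).min
        measurable_const
    · refine Set.Countable.mono ?_ (((Set.countable_range
        fun k : ℤ => ((k : ℝ) / 2 ^ n)).insert i))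
      rintro - ⟨t, rfl⟩
      dsimp only
      rcases min_cases ((⌈(t : ℝ) * 2 ^ n⌉ : ℝ) / 2 ^ n) i with ⟨h, -⟩ | ⟨h, -⟩
      · rw [h]; exact Set.mem_insert_of_mem _ ⟨_, rfl⟩
      · rw [h]; exact Set.mem_insert _ _
    · exact fun t => min_le_right _ _
  refine stronglyMeasurable_of_tendsto (f := U)
    (m := Subtype.instMeasurableSpace.prod (ℱ i)) atTop hUm ?_
  rw [tendsto_pi_nhds]
  rintro ⟨⟨t, ht⟩, ω⟩
  have hts : ∀ n : ℕ, t ≤ min ((⌈t * 2 ^ n⌉ : ℝ) / 2 ^ n) i := by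
    intro n
    refine le_min ?_ ht
    rw [le_div_iff₀ (h2 n)]
    exact Int.le_ceil _
  have htl : Tendsto (fun n : ℕ => min ((⌈t * 2 ^ n⌉ : ℝ) / 2 ^ n) i) atTop (𝓝 t) := by
    have hub : ∀ n : ℕ, min ((⌈t * 2 ^ n⌉ : ℝ) / 2 ^ n) i ≤ t + (2 ^ n)⁻¹ := by
      intro n
      refine le_trans (min_le_left _ _) ?_
      rw [div_le_iff₀ (h2 n)]
      have := (Int.ceil_lt_add_one (t * 2 ^ n)).le
      calc ((⌈t * 2 ^ n⌉ : ℝ)) ≤ t * 2 ^ n + 1 := this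
        _ = (t + (2 ^ n)⁻¹) * 2 ^ n := by
          rw [add_mul, inv_mul_cancel₀ (h2 n).ne']
    have h0 : Tendsto (fun n : ℕ => t + ((2:ℝ) ^ n)⁻¹) atTop (𝓝 (t + 0)) :=
      tendsto_const_nhds.add (tendsto_inv_atTop_zero.comp (tendsto_pow_atTop_atTop_of_one_lt
        (by norm_num : (1:ℝ) < 2)))
    rw [add_zero] at h0
    exact tendsto_of_tendsto_of_tendsto_of_le_of_le tendsto_const_nhds h0 hts hub
  have : Tendsto (fun n : ℕ => min ((⌈t * 2 ^ n⌉ : ℝ) / 2 ^ n) i) atTop (𝓝[Set.Ici t] t) :=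
    tendsto_nhdsWithin_of_tendsto_nhds_of_eventually_within _ htl (Eventually.of_forall hts)
  exact ((hrc ω t).tendsto).comp this

end Prog

section Dyadic
variable {Ω : Type*} {m0 : MeasurableSpace Ω} {ℱ : Filtration ℝ m0}

noncomputable def dyad (ρ : Ω → ℝ) (m : ℕ) (ω : Ω) : ℝ := ⌈ρ ω * 2 ^ m⌉ / 2 ^ m

lemma h2pos (m : ℕ) : (0:ℝ) < 2 ^ m := by positivity

lemma dyad_ge (ρ : Ω → ℝ) (m : ℕ) (ω : Ω) : ρ ω ≤ dyad ρ m ω := by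
  rw [dyad, le_div_iff₀ (h2pos m)]
  exact Int.le_ceil _

lemma dyad_le (ρ : Ω → ℝ) (m : ℕ) (ω : Ω) : dyad ρ m ω ≤ ρ ω + (2 ^ m)⁻¹ := by
  rw [dyad, div_le_iff₀ (h2pos m), add_mul, inv_mul_cancel₀ (h2pos m).ne']
  exact (Int.ceil_lt_add_one _).le

lemma dyad_tendsto (ρ : Ω → ℝ) (ω : Ω) :
    Tendsto (fun m => dyad ρ m ω) atTop (𝓝 (ρ ω)) := by
  have h0 : Tendsto (fun m : ℕ => ρ ω + ((2:ℝ) ^ m)⁻¹) atTop (𝓝 (ρ ω + 0)) :=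
    tendsto_const_nhds.add (tendsto_inv_atTop_zero.comp
      (tendsto_pow_atTop_atTop_of_one_lt (by norm_num : (1:ℝ) < 2)))
  rw [add_zero] at h0
  exact tendsto_of_tendsto_of_tendsto_of_le_of_le tendsto_const_nhds h0
    (fun m => dyad_ge ρ m ω) (fun m => dyad_le ρ m ω)

lemma dyad_isStoppingTime {ρ : Ω → ℝ} (hρ : IsStoppingTime ℱ (fun ω => (ρ ω : WithTop ℝ))) (m : ℕ) :
    IsStoppingTime ℱ (fun ω => (dyad ρ m ω : WithTop ℝ)) := by
  intro t
  simp only [WithTop.coe_le_coe]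
  have : {ω | dyad ρ m ω ≤ t} = {ω | ρ ω ≤ (⌊t * 2 ^ m⌋ : ℝ) / 2 ^ m} := by
    ext ω
    simp only [Set.mem_setOf_eq, dyad, div_le_iff₀ (h2pos m), le_div_iff₀ (h2pos m)]
    constructor
    · intro h
      exact Int.ceil_le.mp (Int.le_floor.mpr h)
    · intro h
      calc (⌈ρ ω * 2 ^ m⌉ : ℝ) ≤ (⌊t * 2 ^ m⌋ : ℝ) := by exact_mod_cast Int.ceil_le.mpr h
        _ ≤ t * 2 ^ m := Int.floor_le _
  rw [this]
  exact ℱ.mono (i := (⌊t * 2 ^ m⌋ : ℝ) / 2 ^ m) (by rw [div_le_iff₀ (h2pos m)]; exact Int.floor_le _) _ (by simpa only [WithTop.coe_le_coe] using hρ.measurableSet_le ((⌊t * 2 ^ m⌋ : ℝ) / 2 ^ m))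

lemma dyad_countable_range (ρ : Ω → ℝ) (m : ℕ) : (Set.range (dyad ρ m)).Countable := by
  refine Set.Countable.mono ?_ (Set.countable_range fun k : ℤ => ((k : ℝ) / 2 ^ m))
  rintro - ⟨ω, rfl⟩
  exact ⟨_, rfl⟩

end Dyadic

section Bounded
variable {Ω : Type*} {m0 : MeasurableSpace Ω} {μ : Measure Ω} [IsProbabilityMeasure μ]
  {ℱ : Filtration ℝ m0} {M : ℝ → Ω → ℝ}

lemma bdd_stoppedValue_ae_eq_condExp (hM : Martingale M ℱ μ)
    (hprog : ProgMeasurable ℱ M)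
    (hrc : ∀ ω, ∀ t : ℝ, ContinuousWithinAt (fun s => M s ω) (Set.Ici t) t)
    {ρ : Ω → WithTop ℝ} (hρ : IsStoppingTime ℱ ρ) {n : ℝ} (hρn : ∀ ω, ρ ω ≤ n) :
    stoppedValue M ρ =ᵐ[μ] μ[M (n + 1)|hρ.measurableSpace] := by
  obtain ⟨ρ, rfl⟩ : ∃ ρ' : Ω → ℝ, ρ = fun ω => (ρ' ω : WithTop ℝ) :=
    ⟨fun ω => (ρ ω).untopA, funext fun ω => by
      have h := hρn ω
      revert h
      show ρ ω ≤ (n : WithTop ℝ) → ρ ω = ((ρ ω).untopA : WithTop ℝ)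
      induction (ρ ω) using WithTop.recTopCoe with
      | top => simp
      | coe a => intro _; rfl⟩
  replace hρn : ∀ ω, ρ ω ≤ n := fun ω => WithTop.coe_le_coe.mp (hρn ω)
  have hρm : ∀ m, IsStoppingTime ℱ (fun ω => (dyad ρ m ω : WithTop ℝ)) := dyad_isStoppingTime hρ
  have hlev : ∀ (m : ℕ) ω, dyad ρ m ω ≤ n + 1 := fun m ω =>
    (dyad_le ρ m ω).trans (add_le_add (hρn ω)
      (by rw [inv_le_one₀ (h2pos m)]; exact one_le_pow₀ one_le_two))
  have hcond : ∀ m, stoppedValue M (fun ω => dyad ρ m ω) =ᵐ[μ]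
      μ[M (n + 1)|(hρm m).measurableSpace] := fun m =>
    hM.stoppedValue_ae_eq_condExp_of_le_const_of_countable_range (hρm m)
      (fun ω => WithTop.coe_le_coe.mpr (hlev m ω))
      (((dyad_countable_range ρ m).image (fun x : ℝ => (x : WithTop ℝ))).mono
        (by rintro - ⟨ω, rfl⟩; exact ⟨_, ⟨ω, rfl⟩, rfl⟩))
  set g : ℕ → Ω → ℝ := fun m => μ[M (n + 1)|(hρm m).measurableSpace] with hg
  have hUIg : UniformIntegrable g 1 μ :=
    (hM.integrable (n + 1)).uniformIntegrable_condExp fun m => (hρm m).measurableSpace_le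
  have hsvm : Measurable[hρ.measurableSpace] (stoppedValue M (fun ω => ρ ω)) :=
    measurable_stoppedValue hprog hρ
  have htd : ∀ ω, Tendsto (fun m => stoppedValue M (fun ω => dyad ρ m ω) ω) atTop
      (𝓝 (stoppedValue M (fun ω => ρ ω) ω)) := by
    intro ω
    have h1 : Tendsto (fun m => dyad ρ m ω) atTop (𝓝[Set.Ici (ρ ω)] (ρ ω)) :=
      tendsto_nhdsWithin_of_tendsto_nhds_of_eventually_within _ (dyad_tendsto ρ ω)
        (Eventually.of_forall fun m => dyad_ge ρ m ω)
    exact (hrc ω (ρ ω)).tendsto.comp h1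
  have haem : ∀ᵐ ω ∂μ, ∀ m, g m ω = stoppedValue M (fun ω => dyad ρ m ω) ω :=
    ae_all_iff.mpr fun m => (hcond m).symm
  have htdg : ∀ᵐ ω ∂μ, Tendsto (fun m => g m ω) atTop (𝓝 (stoppedValue M (fun ω => ρ ω) ω)) := by
    filter_upwards [haem] with ω hω
    exact (htd ω).congr fun m => (hω m).symm
  have hmem : MemLp (stoppedValue M (fun ω => ρ ω)) 1 μ := by
    refine ⟨(hsvm.mono hρ.measurableSpace_le le_rfl).stronglyMeasurable.aestronglyMeasurable, ?_⟩
    refine lt_of_le_of_lt (Lp.eLpNorm_lim_le_liminf_eLpNorm (fun m => hUIg.1 m) _ htdg) ?_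
    refine lt_of_le_of_lt ?_ (memLp_one_iff_integrable.mpr (hM.integrable (n + 1))).2
    calc atTop.liminf (fun m => eLpNorm (g m) 1 μ)
        ≤ atTop.liminf (fun _ : ℕ => eLpNorm (M (n + 1)) 1 μ) :=
          Filter.liminf_le_liminf (Eventually.of_forall fun m =>
            eLpNorm_one_condExp_le_eLpNorm _)
      _ = eLpNorm (M (n + 1)) 1 μ := Filter.liminf_const _
  have hL1 : Tendsto (fun m => eLpNorm (g m - stoppedValue M (fun ω => ρ ω)) 1 μ) atTop (𝓝 0) :=
    tendsto_Lp_finite_of_tendsto_ae le_rfl ENNReal.one_ne_top (fun m => hUIg.1 m) hmem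
      hUIg.2.1 htdg
  refine ae_eq_condExp_of_forall_setIntegral_eq hρ.measurableSpace_le (hM.integrable (n + 1))
    (fun s _ _ => (memLp_one_iff_integrable.mp hmem).integrableOn)
    (fun s hs _ => ?_) hsvm.stronglyMeasurable.aestronglyMeasurable
  have hsm : ∀ m, MeasurableSet[(hρm m).measurableSpace] s := fun m =>
    (hρ.measurableSpace_mono (hρm m) fun ω => WithTop.coe_le_coe.mpr (dyad_ge ρ m ω)) s hs
  have hconst : ∀ m, ∫ ω in s, g m ω ∂μ = ∫ ω in s, M (n + 1) ω ∂μ := fun m =>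
    setIntegral_condExp (hρm m).measurableSpace_le (hM.integrable (n + 1)) (hsm m)
  have htint : Tendsto (fun m => ∫ ω in s, g m ω ∂μ) atTop
      (𝓝 (∫ ω in s, stoppedValue M (fun ω => ρ ω) ω ∂μ)) :=
    tendsto_setIntegral_of_L1' _ (memLp_one_iff_integrable.mp hmem).aestronglyMeasurable
      (Eventually.of_forall fun _ => integrable_condExp) hL1 s
  simp_rw [hconst] at htint
  exact tendsto_nhds_unique htint tendsto_const_nhds

end Bounded

section Pair
variable {Ω : Type*} {m0 : MeasurableSpace Ω} {μ : Measure Ω} [IsProbabilityMeasure μ]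
  {ℱ : Filtration ℝ m0} {M : ℝ → Ω → ℝ}

lemma bdd_pair (hM : Martingale M ℱ μ) (hprog : ProgMeasurable ℱ M)
    (hrc : ∀ ω, ∀ t : ℝ, ContinuousWithinAt (fun s => M s ω) (Set.Ici t) t)
    {ρ₁ ρ₂ : Ω → WithTop ℝ} (h₁ : IsStoppingTime ℱ ρ₁) (h₂ : IsStoppingTime ℱ ρ₂)
    (h12 : ∀ ω, ρ₁ ω ≤ ρ₂ ω) {n : ℝ} (hn : ∀ ω, ρ₂ ω ≤ n) :
    stoppedValue M ρ₁ =ᵐ[μ] μ[stoppedValue M ρ₂|h₁.measurableSpace] := by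
  have e₁ := bdd_stoppedValue_ae_eq_condExp hM hprog hrc h₁ (n := n)
    fun ω => (h12 ω).trans (hn ω)
  have e₂ := bdd_stoppedValue_ae_eq_condExp hM hprog hrc h₂ hn
  have hint₂ : Integrable (stoppedValue M ρ₂) μ :=
    (integrable_congr e₂).mpr integrable_condExp
  have hint₁ : Integrable (stoppedValue M ρ₁) μ :=
    (integrable_congr e₁).mpr integrable_condExp
  refine ae_eq_condExp_of_forall_setIntegral_eq h₁.measurableSpace_le hint₂
    (fun s _ _ => hint₁.integrableOn) (fun s hs _ => ?_)
    (measurable_stoppedValue hprog h₁).stronglyMeasurable.aestronglyMeasurable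
  have hs₂ : MeasurableSet[h₂.measurableSpace] s := h₁.measurableSpace_mono h₂ h12 s hs
  have hs0 : MeasurableSet s := h₁.measurableSpace_le s hs
  calc ∫ ω in s, stoppedValue M ρ₁ ω ∂μ
      = ∫ ω in s, (μ[M (n + 1)|h₁.measurableSpace]) ω ∂μ :=
        setIntegral_congr_ae hs0 (e₁.mono fun ω h _ => h)
    _ = ∫ ω in s, M (n + 1) ω ∂μ :=
        setIntegral_condExp h₁.measurableSpace_le (hM.integrable _) hs
    _ = ∫ ω in s, (μ[M (n + 1)|h₂.measurableSpace]) ω ∂μ :=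
        (setIntegral_condExp h₂.measurableSpace_le (hM.integrable _) hs₂).symm
    _ = ∫ ω in s, stoppedValue M ρ₂ ω ∂μ :=
        (setIntegral_congr_ae hs0 (e₂.mono fun ω h _ => h)).symm

end Pair



/-- Doob's optional sampling theorem: if `M` is a right-continuous martingale,
`T`, `S` are stopping times, and the stopped process `{M(t ∧ T)}` is uniformly
integrable, then `E[M(T) | F_{S∧T}] = M(S∧T)` a.s. -/
theorem optional_sampling
    {Ω : Type*} {m0 : MeasurableSpace Ω} (μ : Measure Ω) [IsProbabilityMeasure μ]
    (ℱ : Filtration ℝ m0) (M : ℝ → Ω → ℝ)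
    (hM : Martingale M ℱ μ)
    (hrc : ∀ ω, ∀ t : ℝ, ContinuousWithinAt (fun s => M s ω) (Set.Ici t) t)
    (T S : Ω → ℝ) (hT : IsStoppingTime ℱ (fun ω => (T ω : WithTop ℝ)))
    (hS : IsStoppingTime ℱ (fun ω => (S ω : WithTop ℝ)))
    (hTnn : ∀ ω, 0 ≤ T ω) (hSnn : ∀ ω, 0 ≤ S ω)
    (hUI : UniformIntegrable (fun t : ℝ => fun ω => M (min t (T ω)) ω) 1 μ) :
    μ[fun ω => M (T ω) ω|(hS.min hT).measurableSpace]
      =ᵐ[μ] fun ω => M (min (S ω) (T ω)) ω := by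
  have hprog : ProgMeasurable ℱ M := progMeasurable_of_rightContinuous hM.stronglyAdapted hrc
  set σ : Ω → ℝ := fun ω => min (S ω) (T ω) with hσdef
  have hσ : IsStoppingTime ℱ (fun ω => (σ ω : WithTop ℝ)) := hS.min hT
  have hσT : ∀ ω, σ ω ≤ T ω := fun ω => min_le_right _ _
  have hσn : ∀ n : ℕ, IsStoppingTime ℱ fun ω => min (σ ω) (n : ℝ) := fun n => hσ.min_const n
  have hτn : ∀ n : ℕ, IsStoppingTime ℱ fun ω => min (T ω) (n : ℝ) := fun n => hT.min_const n
  have hpair : ∀ n : ℕ, stoppedValue M (fun ω => min (σ ω) (n : ℝ)) =ᵐ[μ]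
      μ[stoppedValue M (fun ω => min (T ω) (n : ℝ))|(hσn n).measurableSpace] := fun n =>
    bdd_pair hM hprog hrc (hσn n) (hτn n) (fun ω => min_le_min (WithTop.coe_le_coe.mpr (hσT ω)) le_rfl)
      (n := n) fun ω => min_le_right _ _
  obtain ⟨C, hC⟩ : ∃ C : NNReal, ∀ t : ℝ,
      eLpNorm (fun ω => M (min t (T ω)) ω) 1 μ ≤ C := hUI.2.2
  have hτn_eq : ∀ n : ℕ, stoppedValue M (fun ω => min (T ω) (n : ℝ))
      = fun ω => M (min (n : ℝ) (T ω)) ω := by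
    intro n; funext ω; simp only [stoppedValue]; rw [min_comm]; rfl
  have hsnτ : ∀ n : ℕ, eLpNorm (stoppedValue M (fun ω => min (T ω) (n : ℝ))) 1 μ ≤ C := by
    intro n; rw [hτn_eq n]; exact hC n
  have hsnσ : ∀ n : ℕ, eLpNorm (stoppedValue M (fun ω => min (σ ω) (n : ℝ))) 1 μ ≤ C := by
    intro n
    rw [eLpNorm_congr_ae (hpair n)]
    exact (eLpNorm_one_condExp_le_eLpNorm _).trans (hsnτ n)
  have hmτ : StronglyMeasurable[m0] (stoppedValue M (fun ω => T ω)) :=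
    ((measurable_stoppedValue hprog hT).mono hT.measurableSpace_le le_rfl).stronglyMeasurable
  have hmσ : StronglyMeasurable[m0] (stoppedValue M (fun ω => σ ω)) :=
    ((measurable_stoppedValue hprog hσ).mono hσ.measurableSpace_le le_rfl).stronglyMeasurable
  have hmτn : ∀ n : ℕ, AEStronglyMeasurable (stoppedValue M (fun ω => min (T ω) (n : ℝ))) μ :=
    fun n => ((measurable_stoppedValue hprog (hτn n)).mono (hτn n).measurableSpace_le
      le_rfl).stronglyMeasurable.aestronglyMeasurable
  have hmσn : ∀ n : ℕ, AEStronglyMeasurable (stoppedValue M (fun ω => min (σ ω) (n : ℝ))) μ :=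
    fun n => ((measurable_stoppedValue hprog (hσn n)).mono (hσn n).measurableSpace_le
      le_rfl).stronglyMeasurable.aestronglyMeasurable
  have htd : ∀ ρ : Ω → ℝ, ∀ ω, Tendsto
      (fun n : ℕ => stoppedValue M (fun ω => min (ρ ω) (n : ℝ)) ω) atTop
      (𝓝 (stoppedValue M (fun ω => ρ ω) ω)) := by
    intro ρ ω
    refine tendsto_const_nhds.congr' ?_
    filter_upwards [eventually_ge_atTop ⌈ρ ω⌉₊] with n hn
    have h1 : ρ ω ≤ (n : ℝ) := le_trans (Nat.le_ceil _) (by exact_mod_cast hn)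
    simp only [stoppedValue]
    rw [← WithTop.coe_min, min_eq_left h1]
  have hmem : ∀ (ρ : Ω → ℝ), StronglyMeasurable[m0] (stoppedValue M (fun ω => ρ ω)) →
      (∀ n : ℕ, AEStronglyMeasurable (stoppedValue M (fun ω => min (ρ ω) (n : ℝ))) μ) →
      (∀ n : ℕ, eLpNorm (stoppedValue M (fun ω => min (ρ ω) (n : ℝ))) 1 μ ≤ C) →
      MemLp (stoppedValue M (fun ω => ρ ω)) 1 μ := by
    intro ρ hsm hae hsn
    refine ⟨hsm.aestronglyMeasurable, ?_⟩
    refine lt_of_le_of_lt (Lp.eLpNorm_lim_le_liminf_eLpNorm hae _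
      (Eventually.of_forall (htd ρ))) ?_
    refine lt_of_le_of_lt ?_ (ENNReal.coe_lt_top (r := C))
    calc atTop.liminf (fun n : ℕ => eLpNorm (stoppedValue M (fun ω => min (ρ ω) (n : ℝ))) 1 μ)
        ≤ atTop.liminf (fun _ : ℕ => (C : ENNReal)) :=
          Filter.liminf_le_liminf (Eventually.of_forall hsn)
      _ = C := Filter.liminf_const _
  have hmemT : MemLp (stoppedValue M (fun ω => T ω)) 1 μ := hmem T hmτ hmτn hsnτ
  have hmemσ : MemLp (stoppedValue M (fun ω => σ ω)) 1 μ := hmem σ hmσ hmσn hsnσ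
  have hintT := memLp_one_iff_integrable.mp hmemT
  have hintσ := memLp_one_iff_integrable.mp hmemσ
  have hintτn : ∀ n : ℕ, Integrable (stoppedValue M (fun ω => min (T ω) (n : ℝ))) μ :=
    fun n => memLp_one_iff_integrable.mp ⟨hmτn n, (hsnτ n).trans_lt ENNReal.coe_lt_top⟩
  have hunif : UnifIntegrable (fun n : ℕ => stoppedValue M (fun ω => min (T ω) (n : ℝ))) 1 μ := by
    intro ε hε
    obtain ⟨δ, hδ, h⟩ := hUI.2.1 hε
    refine ⟨δ, hδ, fun n s hs hμs => ?_⟩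
    show eLpNorm (s.indicator (stoppedValue M fun ω => min (T ω) (n : ℝ))) 1 μ
      ≤ ENNReal.ofReal ε
    rw [hτn_eq n]
    exact h (n : ℝ) s hs hμs
  have hL1 : Tendsto (fun n : ℕ =>
      eLpNorm (stoppedValue M (fun ω => min (T ω) (n : ℝ)) - stoppedValue M (fun ω => T ω)) 1 μ)
      atTop (𝓝 0) :=
    tendsto_Lp_finite_of_tendsto_ae le_rfl ENNReal.one_ne_top hmτn hmemT hunif
      (Eventually.of_forall (htd T))
  show μ[stoppedValue M (fun ω => T ω)|(hS.min hT).measurableSpace] =ᵐ[μ] stoppedValue M (fun ω => σ ω)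
  refine (ae_eq_condExp_of_forall_setIntegral_eq (hS.min hT).measurableSpace_le hintT
    (fun s _ _ => hintσ.integrableOn) (fun s hs _ => ?_)
    (measurable_stoppedValue hprog hσ).stronglyMeasurable.aestronglyMeasurable).symm
  -- core set-integral identity
  set A : ℕ → Set Ω := fun n => s ∩ {ω | σ ω ≤ (n : ℝ)} with hA
  have hA_meas_σn : ∀ n : ℕ, MeasurableSet[(hσn n).measurableSpace] (A n) := by
    intro n
    rw [IsStoppingTime.measurableSet]
    refine ⟨le_iSup (fun t => (ℱ t : MeasurableSpace Ω)) (n : ℝ) _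
      (by simpa only [← WithTop.coe_min, WithTop.coe_le_coe] using hs.2 (n : ℝ)), ?_⟩
    intro t
    simp only [← WithTop.coe_min, WithTop.coe_le_coe]
    by_cases h : (n : ℝ) ≤ t
    · have heq : A n ∩ {ω | min (σ ω) (n : ℝ) ≤ t} = s ∩ {ω | σ ω ≤ (n : ℝ)} := by
        ext ω
        simp only [hA, Set.mem_inter_iff, Set.mem_setOf_eq]
        exact ⟨fun hh => hh.1, fun hh => ⟨hh, (min_le_right _ _).trans h⟩⟩
      rw [heq]
      exact ℱ.mono h _ (by simpa only [← WithTop.coe_min, WithTop.coe_le_coe] using hs.2 (n : ℝ))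
    · push_neg at h
      have heq : A n ∩ {ω | min (σ ω) (n : ℝ) ≤ t} = s ∩ {ω | σ ω ≤ t} := by
        ext ω
        simp only [hA, Set.mem_inter_iff, Set.mem_setOf_eq, min_le_iff]
        constructor
        · rintro ⟨⟨h1, h2⟩, h3 | h3⟩
          · exact ⟨h1, h3⟩
          · exact absurd (h.trans_le h3) (lt_irrefl t)
        · intro ⟨h1, h2⟩
          exact ⟨⟨h1, h2.trans h.le⟩, Or.inl h2⟩
      rw [heq]
      simpa only [← WithTop.coe_min, WithTop.coe_le_coe] using hs.2 t
  have hA_m0 : ∀ n, MeasurableSet (A n) := fun n =>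
    (hσn n).measurableSpace_le _ (hA_meas_σn n)
  have hA_mono : Monotone A := by
    intro a b hab ω hω
    exact ⟨hω.1, le_trans hω.2 (Nat.cast_le.mpr hab : (a : ℝ) ≤ (b : ℝ))⟩
  have hA_union : (⋃ n, A n) = s := by
    ext ω
    simp only [Set.mem_iUnion, hA, Set.mem_inter_iff, Set.mem_setOf_eq]
    constructor
    · rintro ⟨n, hn, -⟩; exact hn
    · intro hω
      exact ⟨⌈σ ω⌉₊, hω, Nat.le_ceil _⟩
  have hkey : ∀ n : ℕ, ∫ ω in A n, stoppedValue M (fun ω => σ ω) ω ∂μ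
      = ∫ ω in A n, stoppedValue M (fun ω => min (T ω) (n : ℝ)) ω ∂μ := by
    intro n
    have h1 : ∫ ω in A n, stoppedValue M (fun ω => σ ω) ω ∂μ
        = ∫ ω in A n, stoppedValue M (fun ω => min (σ ω) (n : ℝ)) ω ∂μ :=
      (setIntegral_congr_fun (hA_m0 n) fun ω hω => by
        simp only [stoppedValue]
        rw [← WithTop.coe_min, min_eq_left hω.2]).symm
    have h2 : ∫ ω in A n, stoppedValue M (fun ω => min (σ ω) (n : ℝ)) ω ∂μ
        = ∫ ω in A n,
          (μ[stoppedValue M (fun ω => min (T ω) (n : ℝ))|(hσn n).measurableSpace]) ω ∂μ :=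
      setIntegral_congr_ae (hA_m0 n) ((hpair n).mono fun ω h _ => h)
    have h3 := setIntegral_condExp (hσn n).measurableSpace_le (hintτn n) (hA_meas_σn n)
    rw [h1, h2, h3]
  have hlim1 : Tendsto (fun n : ℕ => ∫ ω in A n, stoppedValue M (fun ω => σ ω) ω ∂μ) atTop
      (𝓝 (∫ ω in s, stoppedValue M (fun ω => σ ω) ω ∂μ)) := by
    have hio : IntegrableOn (stoppedValue M (fun ω => σ ω)) (⋃ n, A n) μ := by
      rw [hA_union]; exact hintσ.integrableOn
    have := tendsto_setIntegral_of_monotone hA_m0 hA_mono hio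
    rwa [hA_union] at this
  have hlim2a : Tendsto (fun n : ℕ => ∫ ω in A n, stoppedValue M (fun ω => T ω) ω ∂μ) atTop
      (𝓝 (∫ ω in s, stoppedValue M (fun ω => T ω) ω ∂μ)) := by
    have hio : IntegrableOn (stoppedValue M (fun ω => T ω)) (⋃ n, A n) μ := by
      rw [hA_union]; exact hintT.integrableOn
    have := tendsto_setIntegral_of_monotone hA_m0 hA_mono hio
    rwa [hA_union] at this
  have hlim2b : Tendsto (fun n : ℕ => ∫ ω in A n,
      (stoppedValue M (fun ω => min (T ω) (n : ℝ)) ω - stoppedValue M (fun ω => T ω) ω) ∂μ) atTop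
      (𝓝 0) := by
    have hbd : ∀ n : ℕ, ‖∫ ω in A n,
        (stoppedValue M (fun ω => min (T ω) (n : ℝ)) ω - stoppedValue M (fun ω => T ω) ω) ∂μ‖
        ≤ (eLpNorm (stoppedValue M (fun ω => min (T ω) (n : ℝ)) - stoppedValue M (fun ω => T ω)) 1 μ).toReal := by
      intro n
      set F : Ω → ℝ := (stoppedValue M fun ω => min (T ω) (n : ℝ)) - stoppedValue M (fun ω => T ω) with hF
      have hint : Integrable F μ := (hintτn n).sub hintT
      have e1 : ∫ ω in A n,
          (stoppedValue M (fun ω => min (T ω) (n : ℝ)) ω - stoppedValue M (fun ω => T ω) ω) ∂μ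
          = ∫ ω in A n, F ω ∂μ := rfl
      rw [e1]
      calc ‖∫ ω in A n, F ω ∂μ‖
          ≤ ∫ ω in A n, ‖F ω‖ ∂μ := norm_integral_le_integral_norm _
        _ ≤ ∫ ω, ‖F ω‖ ∂μ :=
            setIntegral_le_integral hint.norm (Eventually.of_forall fun ω => norm_nonneg _)
        _ = (eLpNorm F 1 μ).toReal := by
            rw [integral_norm_eq_lintegral_enorm hint.aestronglyMeasurable,
              eLpNorm_one_eq_lintegral_enorm]
    have h0 : Tendsto (fun n : ℕ =>
        (eLpNorm (stoppedValue M (fun ω => min (T ω) (n : ℝ)) - stoppedValue M (fun ω => T ω)) 1 μ).toReal)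
        atTop (𝓝 0) := by
      have := (ENNReal.tendsto_toReal (a := 0) (by simp)).comp hL1
      simpa [Function.comp_def] using this
    exact squeeze_zero_norm hbd h0
  have hlim2 : Tendsto (fun n : ℕ =>
      ∫ ω in A n, stoppedValue M (fun ω => min (T ω) (n : ℝ)) ω ∂μ) atTop
      (𝓝 (∫ ω in s, stoppedValue M (fun ω => T ω) ω ∂μ)) := by
    have heq : ∀ n : ℕ, ∫ ω in A n, stoppedValue M (fun ω => min (T ω) (n : ℝ)) ω ∂μ
        = (∫ ω in A n,
            (stoppedValue M (fun ω => min (T ω) (n : ℝ)) ω - stoppedValue M (fun ω => T ω) ω) ∂μ)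
          + ∫ ω in A n, stoppedValue M (fun ω => T ω) ω ∂μ := by
      intro n
      rw [integral_sub ((hintτn n).integrableOn) hintT.integrableOn]
      ring
    have := (hlim2b.add hlim2a)
    rw [zero_add] at this
    exact this.congr fun n => (heq n).symm
  exact tendsto_nhds_unique (hlim1.congr hkey) hlim2
end

section
/- Let p̃_k(s) be the Laplace transform of the marginal probabilities p_k(t) = P{N^{α₁,α₂}(t) = k} of the mixed-fractional Poisson process. Then p̃_k(s) = λ^k (C₁ s^{α₁} + C₂ s^{α₂}) / (s (λ + C₁ s^{α₁} + C₂ s^{α₂})^{k+1}) for k = 0, 1, 2, … -/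
open MeasureTheory

lemma aux_gamma_integrable {b : ℝ} (hb : 0 < b) (k : ℕ) :
    IntegrableOn (fun u : ℝ => u ^ k * Real.exp (-(b * u))) (Set.Ioi 0) := by
  have h := integrableOn_rpow_mul_exp_neg_mul_rpow (p := 1) (s := (k : ℝ)) (b := b)
    (lt_of_lt_of_le neg_one_lt_zero (Nat.cast_nonneg k)) zero_lt_one hb
  refine h.congr_fun (fun u hu => ?_) measurableSet_Ioi
  beta_reduce
  rw [Real.rpow_natCast, Real.rpow_one, neg_mul]

lemma aux_gamma_int {b : ℝ} (hb : 0 < b) (k : ℕ) :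
    ∫ u in Set.Ioi (0 : ℝ), u ^ k * Real.exp (-(b * u))
      = (Nat.factorial k) / b ^ (k + 1) := by
  have h := Real.integral_rpow_mul_exp_neg_mul_Ioi (a := (k : ℝ) + 1) (by positivity) hb
  rw [show ((k : ℝ) + 1 - 1) = (k : ℝ) by ring] at h
  have h2 : (∫ u in Set.Ioi (0 : ℝ), u ^ k * Real.exp (-(b * u)))
      = ∫ u in Set.Ioi (0 : ℝ), u ^ ((k : ℝ)) * Real.exp (-(b * u)) := by
    refine setIntegral_congr_fun measurableSet_Ioi fun u _ => ?_
    rw [Real.rpow_natCast]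
  rw [h2, h, Real.Gamma_nat_eq_factorial, show ((k : ℝ) + 1) = ((k + 1 : ℕ) : ℝ) by push_cast; ring,
    Real.rpow_natCast, one_div, inv_pow]
  field_simp

/-- Laplace transform of the marginal probabilities of the mixed-fractional
Poisson process: `p̃_k(s) = λ^k (C₁ s^{α₁} + C₂ s^{α₂}) / (s (λ + C₁ s^{α₁} + C₂ s^{α₂})^{k+1})`. -/
theorem mfpp_marginal_laplace
    (lam C₁ C₂ α₁ α₂ : ℝ) (hlam : 0 < lam) (hC₁ : 0 ≤ C₁) (hC₂ : 0 < C₂)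
    (hsum : C₁ + C₂ = 1) (h1 : 0 < α₁) (h12 : α₁ < α₂) (h2 : α₂ < 1)
    (f : ℝ → ℝ → ℝ)
    (hfm : Measurable (Function.uncurry f)) (hfnn : ∀ t u, 0 ≤ f t u)
    (hf : ∀ u ≥ (0 : ℝ), ∀ s > (0 : ℝ),
      (∫ t in Set.Ioi (0 : ℝ), Real.exp (-(s * t)) * f t u)
        = ((C₁ * s ^ α₁ + C₂ * s ^ α₂) / s)
            * Real.exp (-(u * (C₁ * s ^ α₁ + C₂ * s ^ α₂))))
    (p : ℕ → ℝ → ℝ)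
    (hp : ∀ k t, p k t
      = ∫ u in Set.Ioi (0 : ℝ),
          Real.exp (-(lam * u)) * (lam * u) ^ k / (Nat.factorial k) * f t u) :
    ∀ s > (0 : ℝ), ∀ k : ℕ,
      (∫ t in Set.Ioi (0 : ℝ), Real.exp (-(s * t)) * p k t)
        = lam ^ k * (C₁ * s ^ α₁ + C₂ * s ^ α₂)
            / (s * (lam + C₁ * s ^ α₁ + C₂ * s ^ α₂) ^ (k + 1)) := by
  intro s hs k
  set φ := C₁ * s ^ α₁ + C₂ * s ^ α₂ with hφdef
  have hφ : 0 < φ := by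
    have ha : 0 ≤ C₁ * s ^ α₁ := mul_nonneg hC₁ (Real.rpow_pos_of_pos hs _).le
    have hb : 0 < C₂ * s ^ α₂ := mul_pos hC₂ (Real.rpow_pos_of_pos hs _)
    rw [hφdef]; linarith
  have hs0 : s ≠ 0 := ne_of_gt hs
  have hk0 : (Nat.factorial k : ℝ) ≠ 0 := Nat.cast_ne_zero.2 (Nat.factorial_ne_zero k)
  have hlamφ : 0 < lam + φ := by linarith
  -- integrability of the t-integrand for each u ≥ 0
  have hint_t : ∀ u ≥ (0 : ℝ),
      IntegrableOn (fun t => Real.exp (-(s * t)) * f t u) (Set.Ioi 0) := by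
    intro u hu
    by_contra hni
    have h0 := hf u hu s hs
    rw [MeasureTheory.integral_undef hni] at h0
    have hpos : 0 < (φ / s) * Real.exp (-(u * φ)) := by positivity
    rw [← h0] at hpos
    exact lt_irrefl 0 hpos
  -- the key pointwise algebraic identity
  have key : ∀ u : ℝ,
      Real.exp (-(lam * u)) * (lam * u) ^ k / (Nat.factorial k) * (φ / s * Real.exp (-(u * φ)))
        = (lam ^ k * φ / (s * (Nat.factorial k))) * (u ^ k * Real.exp (-((lam + φ) * u))) := by
    intro u
    have hexp : Real.exp (-((lam + φ) * u)) = Real.exp (-(lam * u)) * Real.exp (-(u * φ)) := by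
      rw [← Real.exp_add]; ring_nf
    rw [hexp, mul_pow]
    field_simp
  -- measurability of the two-variable integrand
  have hF_m : Measurable (Function.uncurry fun t u =>
      Real.exp (-(s * t)) * (Real.exp (-(lam * u)) * (lam * u) ^ k / (Nat.factorial k) * f t u)) := by
    have h1 : Measurable fun q : ℝ × ℝ => Real.exp (-(s * q.1)) :=
      ((measurable_fst.const_mul s).neg).exp
    have h2 : Measurable fun q : ℝ × ℝ =>
        Real.exp (-(lam * q.2)) * (lam * q.2) ^ k / (Nat.factorial k) :=
      ((((measurable_snd.const_mul lam).neg).exp).mul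
        ((measurable_snd.const_mul lam).pow_const k)).div_const _
    exact h1.mul (h2.mul hfm)
  -- Fubini integrability on the product
  have hFint : Integrable (Function.uncurry fun t u =>
      Real.exp (-(s * t)) * (Real.exp (-(lam * u)) * (lam * u) ^ k / (Nat.factorial k) * f t u))
      ((volume.restrict (Set.Ioi 0)).prod (volume.restrict (Set.Ioi 0))) := by
    rw [integrable_prod_iff' hF_m.aestronglyMeasurable]
    constructor
    · filter_upwards [ae_restrict_mem measurableSet_Ioi] with u hu
      have h1 := (hint_t u (le_of_lt hu)).const_mul
        (Real.exp (-(lam * u)) * (lam * u) ^ k / (Nat.factorial k))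
      refine h1.congr (Filter.Eventually.of_forall fun t => ?_)
      simp only [Function.uncurry]
      ring
    · have heq : ∀ᵐ u ∂(volume.restrict (Set.Ioi (0:ℝ))),
          (∫ t in Set.Ioi (0:ℝ), ‖Real.exp (-(s * t)) *
              (Real.exp (-(lam * u)) * (lam * u) ^ k / (Nat.factorial k) * f t u)‖)
            = (lam ^ k * φ / (s * (Nat.factorial k))) * (u ^ k * Real.exp (-((lam + φ) * u))) := by
        filter_upwards [ae_restrict_mem measurableSet_Ioi] with u hu
        have hu' : (0:ℝ) < u := hu
        have hgu : 0 ≤ Real.exp (-(lam * u)) * (lam * u) ^ k / (Nat.factorial k) := by positivity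
        have hnorm : (fun t => ‖Real.exp (-(s * t)) *
              (Real.exp (-(lam * u)) * (lam * u) ^ k / (Nat.factorial k) * f t u)‖)
            = fun t => Real.exp (-(lam * u)) * (lam * u) ^ k / (Nat.factorial k) *
              (Real.exp (-(s * t)) * f t u) := by
          funext t
          have hft := hfnn t u
          rw [Real.norm_eq_abs, abs_of_nonneg (by positivity)]
          ring
        rw [hnorm, MeasureTheory.integral_const_mul, hf u hu'.le s hs]
        exact key u
      simp only [Function.uncurry_apply_pair]
      exact ((aux_gamma_integrable hlamφ k).const_mul _).congr (heq.mono fun u h => h.symm)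
  -- main computation
  have step1 : (∫ t in Set.Ioi (0:ℝ), Real.exp (-(s * t)) * p k t)
      = ∫ t in Set.Ioi (0:ℝ), ∫ u in Set.Ioi (0:ℝ),
          Real.exp (-(s * t)) *
            (Real.exp (-(lam * u)) * (lam * u) ^ k / (Nat.factorial k) * f t u) := by
    refine setIntegral_congr_fun measurableSet_Ioi fun t _ => ?_
    rw [hp k t, ← MeasureTheory.integral_const_mul]
  have step2 := MeasureTheory.integral_integral_swap hFint
  have step3 : (∫ u in Set.Ioi (0:ℝ), ∫ t in Set.Ioi (0:ℝ),
        Real.exp (-(s * t)) *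
          (Real.exp (-(lam * u)) * (lam * u) ^ k / (Nat.factorial k) * f t u))
      = ∫ u in Set.Ioi (0:ℝ),
          (lam ^ k * φ / (s * (Nat.factorial k))) * (u ^ k * Real.exp (-((lam + φ) * u))) := by
    refine setIntegral_congr_fun measurableSet_Ioi fun u hu => ?_
    have hu' : (0:ℝ) < u := hu
    have hcomm : ∀ t : ℝ, Real.exp (-(s * t)) *
          (Real.exp (-(lam * u)) * (lam * u) ^ k / (Nat.factorial k) * f t u)
        = Real.exp (-(lam * u)) * (lam * u) ^ k / (Nat.factorial k) *
          (Real.exp (-(s * t)) * f t u) := fun t => by ring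
    simp_rw [hcomm]
    rw [MeasureTheory.integral_const_mul, hf u hu'.le s hs]
    exact key u
  rw [step1, step2, step3, MeasureTheory.integral_const_mul, aux_gamma_int hlamφ k]
  rw [show lam + C₁ * s ^ α₁ + C₂ * s ^ α₂ = lam + φ by rw [hφdef]; ring]
  have hpow : (0:ℝ) < (lam + φ) ^ (k + 1) := pow_pos hlamφ _
  field_simp
end
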